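/- Let Γ be a colored tree with principal subtrees Γ_1, …, Γ_m. For each i let r_i be the number of one-dimensional faces of the cone C(Γ_i) if Γ_i is non-trivial, and set r_i = 0 if Γ_i is trivial. Then the number of one-dimensional faces of the cone C(Γ) equals (r_1 + 1)(r_2 + 1)⋯(r_m + 1). -/

import Mathlib

noncomputable section
open Classical

/-- A rose tree whose leaves ("colored vertices") carry labels of type `α` and whose
internal vertices ("uncolored vertices") are unlabelled. -/
inductive CTree (α : Type) : Type
  | leaf (a : α) : CTree α
  | node (ts : List (CTree α)) : CTree α

namespace CTree

variable {α : Type}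

/-- The subtree of `t` at a position `p` (a list of child indices), if it exists. -/
def sub : CTree α → List ℕ → Option (CTree α)
  | t, [] => some t
  | leaf _, _ :: _ => none
  | node ts, i :: p =>
      match ts[i]? with
      | some c => sub c p
      | none => none

/-- All lists of natural numbers of length at most `k` with entries `< m`. -/
def allLists (m : ℕ) : ℕ → List (List ℕ)
  | 0 => [[]]
  | k + 1 => [] :: (List.range m).flatMap (fun i => (allLists m k).map (i :: ·))

/-- The finite set of positions of vertices of `t`. -/
def vertS (t : CTree α) : Finset (List ℕ) :=
  (allLists (sizeOf t) (sizeOf t)).toFinset.filter (fun p => (t.sub p).isSome)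

/-- The finite set of positions of uncolored (internal) vertices of `t`. -/
def uncS (t : CTree α) : Finset (List ℕ) :=
  (allLists (sizeOf t) (sizeOf t)).toFinset.filter (fun p => ∃ ts, t.sub p = some (node ts))

/-- The finite set of positions of colored vertices (leaves) of `t`. -/
def colS (t : CTree α) : Finset (List ℕ) :=
  (allLists (sizeOf t) (sizeOf t)).toFinset.filter (fun p => ∃ a, t.sub p = some (leaf a))

/-- Edges of `t` are identified with the positions of non-root vertices (an edge joins
the vertex at `p ≠ []` to its parent at `p.dropLast`). -/
def edgeS (t : CTree α) : Finset (List ℕ) := (vertS t).erase []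

/-- `t` is a colored tree: every internal vertex has at least one child (so the leaves,
i.e. the childless vertices, are exactly the colored vertices) and the root is
uncolored. -/
def IsColoredTree (t : CTree α) : Prop :=
  (∀ p, t.sub p ≠ some (node ([] : List (CTree α)))) ∧ ∃ ts, t = node ts

/-- The weight `w_d ∈ M` of an edge `d`: the sum of the dual basis vectors `e_u^*`
over uncolored vertices `u` that are descendants of the upper endpoint of `d` but not
descendants of the lower endpoint of `d`. -/
def wt (t : CTree α) (d : List ℕ) : List ℕ → ℤ := fun u =>
  if u ∈ uncS t ∧ d.dropLast <+: u ∧ ¬ d <+: u then 1 else 0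

/-- `s_v ∈ M` : the sum of `e_u^*` over the uncolored descendants `u` of `v`;
`s(Γ) = sv t []`. -/
def sv (t : CTree α) (v : List ℕ) : List ℕ → ℤ := fun u =>
  if u ∈ uncS t ∧ v <+: u then 1 else 0

/-- The pairing between `M = Hom(ℤ^g, ℤ)` and `ℤ^g` (both realized as integer-valued
functions on the uncolored vertices of `t`). -/
def pairZ (t : CTree α) (μ x : List ℕ → ℤ) : ℤ := ∑ p ∈ uncS t, μ p * x p

/-- The pairing between `M` and `ℝ^g`. -/
def pairR (t : CTree α) (μ : List ℕ → ℤ) (x : List ℕ → ℝ) : ℝ :=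
  ∑ p ∈ uncS t, (μ p : ℝ) * x p

/-- The multiset of edges of the (downward) path from the vertex `v` to the vertex `c`;
each edge occurs with multiplicity one. -/
def pathEdges (t : CTree α) (v c : List ℕ) : Multiset (List ℕ) :=
  ((edgeS t).filter (fun d => v <+: d ∧ d ≠ v ∧ d <+: c)).val

/-- The relation `A ∼ B` on multisets of edges: `A` and `B` consist exactly of the edges
of two non-self-crossing paths from a common vertex to two colored vertices. -/
def Sim (t : CTree α) (A B : Multiset (List ℕ)) : Prop :=
  ∃ v ∈ vertS t, ∃ c₁ ∈ colS t, ∃ c₂ ∈ colS t, v <+: c₁ ∧ v <+: c₂ ∧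
    A = pathEdges t v c₁ ∧ B = pathEdges t v c₂

/-- `Y` is a minimally complete subset of the set of edges of `t`: every
(non-self-crossing) path from the root to a colored vertex contains exactly one edge
of `Y`. -/
def MinComplete (t : CTree α) (Y : Finset (List ℕ)) : Prop :=
  Y ⊆ edgeS t ∧ ∀ c ∈ colS t, ∃! d, d ∈ Y ∧ d <+: c

/-- The finite set of minimally complete subsets of the edge set of `t`. -/
def MCfin (t : CTree α) : Finset (Finset (List ℕ)) :=
  (edgeS t).powerset.filter (fun Y => MinComplete t Y)

/-- The dual cone `C(Γ) = {x ∈ ℝ^g | ⟨w_d, x⟩ ≥ 0 for all edges d}`. -/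
def dualCone (t : CTree α) : Set (List ℕ → ℝ) :=
  {x | (∀ p, p ∉ uncS t → x p = 0) ∧ ∀ d ∈ edgeS t, 0 ≤ pairR t (wt t d) x}

/-- The ray spanned by a vector `v`. -/
def ray (v : List ℕ → ℝ) : Set (List ℕ → ℝ) := {x | ∃ c : ℝ, 0 ≤ c ∧ x = c • v}

/-- `F` is a one-dimensional face (extreme ray) of the convex cone `C`. -/
def IsOneDimFace (C F : Set (List ℕ → ℝ)) : Prop :=
  F ⊆ C ∧ (∃ v, v ≠ 0 ∧ F = ray v) ∧
    ∀ x ∈ C, ∀ y ∈ C, x + y ∈ F → x ∈ F ∧ y ∈ F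

/-- The convex cone generated by a set `G ⊆ ℤ^g` inside `ℝ^g`: all finite nonnegative
real combinations of elements of `G`. -/
def coneHull (G : Set (List ℕ → ℤ)) : Set (List ℕ → ℝ) :=
  {x | ∃ (F : Finset (List ℕ → ℤ)) (c : (List ℕ → ℤ) → ℝ),
    ↑F ⊆ G ∧ (∀ v ∈ F, 0 ≤ c v) ∧
    x = ∑ v ∈ F, c v • (fun p => ((v p : ℤ) : ℝ))}

/-- `e_{v_0} ∈ ℤ^g`: the basis vector of the root vertex. -/
def e0 : List ℕ → ℤ := fun p => if p = [] then 1 else 0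

/-- The inclusion `ℤ^{g_i} → ℤ^g` corresponding to the `i`-th principal subtree. -/
def shift (i : ℕ) (f : List ℕ → ℤ) : List ℕ → ℤ := fun p =>
  match p with
  | [] => 0
  | j :: q => if j = i then f q else 0

def isNodeB : CTree α → Bool
  | leaf _ => false
  | node _ => true

/-- The recursively defined set `G(Γ) ⊆ ℤ^g`: `G(Γ)` consists of all vectors
`e_{v₀} + ∑_{i ∈ J} (w_i - e_{v₀})` where `J` ranges over subsets of the set of indices
of non-trivial principal subtrees and `w_i ∈ G(Γ_i)` (in particular if `g = 1` this is
just `{e_{v₀}}`). -/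
def Gset : CTree α → Set (List ℕ → ℤ)
  | leaf _ => ∅
  | node ts =>
      {v | ∃ (J : Finset (Fin ts.length)) (w : Fin ts.length → (List ℕ → ℤ)),
        (∀ i ∈ J, (ts.get i).isNodeB = true ∧ w i ∈ Gset (ts.get i)) ∧
        v = e0 + ∑ i ∈ J, (shift i.1 (w i) - e0)}
  termination_by t => sizeOf t
  decreasing_by
    have h1 : ts.get i ∈ ts := List.get_mem ts i
    have h2 := List.sizeOf_lt_of_mem h1
    simp only [CTree.node.sizeOf_spec]
    omega

/-- Transport of a set of edges of `Γ` to the `i`-th principal subtree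
(`Y ∩ E(Γ_i)`, rewritten in the coordinates of `Γ_i`). -/
def sect (i : ℕ) (Y : Finset (List ℕ)) : Finset (List ℕ) :=
  (Y.filter (fun p => p.head? = some i)).image List.tail

/-- The recursively defined vector `v_Y ∈ ℤ^g` attached to a (minimally complete) set
of edges `Y`: `v_Y = e_{v₀} + ∑_{i ∈ I} (v_{Y_i} - e_{v₀})` where
`I = {i | d_i ∉ Y}` and `Y_i = Y ∩ E(Γ_i)` (if `g = 1` this is just `e_{v₀}`). -/
def vY : CTree α → Finset (List ℕ) → (List ℕ → ℤ)
  | leaf _, _ => 0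
  | node ts, Y =>
      e0 + ∑ i ∈ Finset.univ.filter (fun i : Fin ts.length => [i.1] ∉ Y),
        (shift i.1 (vY (ts.get i) (sect i.1 Y)) - e0)
  termination_by t => sizeOf t
  decreasing_by
    have h1 : ts.get i ∈ ts := List.get_mem ts i
    have h2 := List.sizeOf_lt_of_mem h1
    simp only [CTree.node.sizeOf_spec]
    omega

/-- The set of balanced labellings `X(Γ) ⊆ ℂ^{E(Γ)}`. -/
def Xbal (t : CTree α) : Set (List ℕ → ℂ) :=
  {x | ∀ v ∈ uncS t, ∀ c ∈ colS t, ∀ c' ∈ colS t, v <+: c → v <+: c' →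
    ((pathEdges t v c).map x).prod = ((pathEdges t v c').map x).prod}

/-- `Y ⊆ E(Γ)` is complete: for every finite multiset `A` of edges, the monomial
`∏_{d ∈ A} x_d` vanishes identically on `{x ∈ X(Γ) | x_y = 0 ∀ y ∈ Y}` if and only if
`A` contains at least one edge belonging to `Y`. -/
def CompleteSet (t : CTree α) (Y : Finset (List ℕ)) : Prop :=
  ∀ A : Multiset (List ℕ), (∀ d ∈ A, d ∈ edgeS t) →
    ((∀ x ∈ Xbal t, (∀ y ∈ Y, x y = 0) → (A.map x).prod = 0) ↔ ∃ d ∈ A, d ∈ Y)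

/-- A partition of a type `I`: a finite collection of nonempty pairwise disjoint
subsets covering `I`. -/
def IsPart {I : Type} (P : Finset (Finset I)) : Prop :=
  (∀ S ∈ P, S ≠ ∅) ∧ ∀ a : I, ∃! S, S ∈ P ∧ a ∈ S

/-- The tree with a single uncolored vertex whose children are the colored vertices
labelled by the elements of `S`. -/
def blockTree {I : Type} (S : Finset I) : CTree I := node (S.toList.map leaf)

/-- The colored tree `Γ_P` of a partition `P`: the root has one child for each block
`S ∈ P`, an uncolored vertex whose children are colored vertices labelled by the
elements of `S`. -/
def gammaP {I : Type} (P : Finset (Finset I)) : CTree I := node (P.toList.map blockTree)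

/-- A tree homomorphism `t → t'`, described by a map `f` on vertex positions: it sends
root to root, vertices to vertices, the two endpoints of any edge to the two endpoints
of an edge, and restricts to a label-preserving bijection between the colored
vertices. -/
def TreeHom {I : Type} (t t' : CTree I) (f : List ℕ → List ℕ) : Prop :=
  f [] = [] ∧
  (∀ p ∈ vertS t, f p ∈ vertS t') ∧
  (∀ p ∈ vertS t, p ≠ [] →
    (f p ≠ [] ∧ (f p).dropLast = f p.dropLast) ∨
    (f p.dropLast ≠ [] ∧ (f p.dropLast).dropLast = f p)) ∧
  (∀ p a, t.sub p = some (leaf a) → t'.sub (f p) = some (leaf a)) ∧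
  Set.BijOn f {p | ∃ a, t.sub p = some (leaf a)} {q | ∃ a, t'.sub q = some (leaf a)}

/-- A partition `P` of the label set is compatible with the colored tree `t` if there
exists a tree homomorphism `t → Γ_P`. -/
def Compatible {I : Type} (t : CTree I) (P : Finset (Finset I)) : Prop :=
  ∃ f, TreeHom t (gammaP P) f

/-- `C_y ⊆ I` : the labels of the colored vertices whose path from the root contains
the edge `y`. -/
def Cy {I : Type} [Fintype I] [DecidableEq I] (t : CTree I) (y : List ℕ) : Finset I :=
  Finset.univ.filter (fun a => ∃ p, t.sub p = some (leaf a) ∧ y <+: p)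

end CTree
section AuxDev
namespace CTree
variable {α : Type}

lemma length_le_sizeOf (l : List (CTree α)) : l.length ≤ sizeOf l := by
  induction l with
  | nil => simp
  | cons a l ih => simp only [List.length_cons, List.cons.sizeOf_spec]; omega

lemma sizeOf_pos' (t : CTree α) : 0 < sizeOf t := by
  cases t with
  | leaf a => simp
  | node ts => simp only [CTree.node.sizeOf_spec]; omega

lemma mem_allLists {m k : ℕ} {p : List ℕ} :
    p ∈ allLists m k ↔ p.length ≤ k ∧ ∀ x ∈ p, x < m := by
  induction k generalizing p with
  | zero =>
    simp only [allLists, List.mem_singleton]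
    constructor
    · rintro rfl; simp
    · rintro ⟨h1, _⟩; exact List.eq_nil_of_length_eq_zero (Nat.le_zero.1 h1)
  | succ k ih =>
    cases p with
    | nil => simp [allLists]
    | cons a q =>
      simp only [allLists, List.mem_cons, List.mem_flatMap, List.mem_map, List.mem_range,
        List.cons.injEq, reduceCtorEq, false_or]
      constructor
      · rintro ⟨i, hi, q', hq', rfl, rfl⟩
        obtain ⟨h1, h2⟩ := ih.1 hq'
        refine ⟨by simpa using h1, ?_⟩
        intro x hx
        rcases hx with rfl | hx
        · exact hi
        · exact h2 x hx
      · rintro ⟨h1, h2⟩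
        exact ⟨a, h2 a (by simp), q, ih.2 ⟨by simpa using h1, fun x hx => h2 x (by simp [hx])⟩,
          rfl, rfl⟩

lemma sub_nil (t : CTree α) : t.sub [] = some t := by cases t <;> rfl

lemma sub_node_cons (ts : List (CTree α)) (i : ℕ) (p : List ℕ) :
    (node ts).sub (i :: p) = (ts[i]?).bind (fun c => c.sub p) := by
  cases h : ts[i]? <;> simp [sub, h]

lemma get_eq_of_getElem? {ts : List (CTree α)} {i : ℕ} {c : CTree α} (h : ts[i]? = some c) :
    ∃ hi : i < ts.length, ts.get ⟨i, hi⟩ = c := by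
  have hi : i < ts.length := by
    by_contra hcon
    rw [List.getElem?_eq_none (by omega)] at h
    exact nomatch h
  exact ⟨hi, by simpa using (List.getElem?_eq_getElem hi).symm.trans h⟩

lemma bounds_of_isSome_sub : ∀ (p : List ℕ) (t : CTree α), (t.sub p).isSome →
    p.length < sizeOf t ∧ ∀ x ∈ p, x < sizeOf t := by
  intro p
  induction p with
  | nil => intro t _; exact ⟨sizeOf_pos' t, by simp⟩
  | cons i q ih =>
    intro t h
    cases t with
    | leaf a => simp [sub] at h
    | node ts =>
      rw [sub_node_cons] at h
      cases hc : ts[i]? with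
      | none => rw [hc] at h; exact absurd h (by simp)
      | some c =>
        rw [hc] at h
        obtain ⟨h1, h2⟩ := ih c (by simpa using h)
        obtain ⟨hi, hg⟩ := get_eq_of_getElem? hc
        have hmem : c ∈ ts := hg ▸ List.get_mem ts ⟨i, hi⟩
        have hsz : sizeOf c < sizeOf ts := List.sizeOf_lt_of_mem hmem
        have hlen : ts.length ≤ sizeOf ts := length_le_sizeOf ts
        constructor
        · simp only [List.length_cons, CTree.node.sizeOf_spec]; omega
        · intro x hx
          rcases List.mem_cons.1 hx with rfl | hx
          · simp only [CTree.node.sizeOf_spec]; omega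
          · have := h2 x hx; simp only [CTree.node.sizeOf_spec]; omega

lemma mem_allLists_of_isSome_sub {t : CTree α} {p : List ℕ} (h : (t.sub p).isSome) :
    p ∈ allLists (sizeOf t) (sizeOf t) := by
  obtain ⟨h1, h2⟩ := bounds_of_isSome_sub p t h
  exact mem_allLists.2 ⟨Nat.le_of_lt h1, h2⟩

lemma mem_vertS {t : CTree α} {p : List ℕ} : p ∈ vertS t ↔ (t.sub p).isSome := by
  unfold vertS
  rw [Finset.mem_filter, List.mem_toFinset]
  exact ⟨fun h => h.2, fun h => ⟨mem_allLists_of_isSome_sub h, h⟩⟩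

lemma mem_uncS {t : CTree α} {p : List ℕ} :
    p ∈ uncS t ↔ ∃ us, t.sub p = some (node us) := by
  unfold uncS
  rw [Finset.mem_filter, List.mem_toFinset]
  refine ⟨fun h => h.2, fun h => ⟨?_, h⟩⟩
  obtain ⟨us, hus⟩ := h
  exact mem_allLists_of_isSome_sub (by simp [hus])

lemma mem_colS {t : CTree α} {p : List ℕ} :
    p ∈ colS t ↔ ∃ a, t.sub p = some (leaf a) := by
  unfold colS
  rw [Finset.mem_filter, List.mem_toFinset]
  refine ⟨fun h => h.2, fun h => ⟨?_, h⟩⟩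
  obtain ⟨a, ha⟩ := h
  exact mem_allLists_of_isSome_sub (by simp [ha])

lemma mem_edgeS {t : CTree α} {p : List ℕ} :
    p ∈ edgeS t ↔ p ≠ [] ∧ (t.sub p).isSome := by
  unfold edgeS
  rw [Finset.mem_erase, mem_vertS]

lemma getElem?_get (ts : List (CTree α)) (i : Fin ts.length) :
    ts[i.1]? = some (ts.get i) := by
  rw [List.getElem?_eq_getElem i.2]; rfl

lemma sub_node_cons_fin (ts : List (CTree α)) (i : Fin ts.length) (p : List ℕ) :
    (node ts).sub (i.1 :: p) = (ts.get i).sub p := by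
  rw [sub_node_cons, getElem?_get]; rfl

lemma mem_uncS_node {ts : List (CTree α)} {p : List ℕ} :
    p ∈ uncS (node ts) ↔ p = [] ∨ ∃ i : Fin ts.length, ∃ q ∈ uncS (ts.get i), p = i.1 :: q := by
  rw [mem_uncS]
  cases p with
  | nil => simp [sub_nil]
  | cons i q =>
    simp only [reduceCtorEq, false_or]
    constructor
    · rintro ⟨us, hus⟩
      rw [sub_node_cons] at hus
      cases hc : ts[i]? with
      | none => rw [hc] at hus; simp at hus
      | some c =>
        rw [hc] at hus; simp only [Option.bind_some] at hus
        obtain ⟨hi, hg⟩ := get_eq_of_getElem? hc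
        exact ⟨⟨i, hi⟩, q, mem_uncS.2 ⟨us, by rw [hg]; exact hus⟩, rfl⟩
    · rintro ⟨i, q', hq, hp⟩
      injection hp with h1 h2
      subst h1; subst h2
      obtain ⟨us, hus⟩ := mem_uncS.1 hq
      exact ⟨us, by rw [sub_node_cons_fin]; exact hus⟩

lemma mem_edgeS_node {ts : List (CTree α)} {p : List ℕ} :
    p ∈ edgeS (node ts) ↔
      ∃ i : Fin ts.length, p = [i.1] ∨ ∃ e ∈ edgeS (ts.get i), p = i.1 :: e := by
  rw [mem_edgeS]
  cases p with
  | nil => simp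
  | cons i q =>
    simp only [ne_eq, reduceCtorEq, not_false_eq_true, true_and]
    constructor
    · intro h
      rw [sub_node_cons] at h
      cases hc : ts[i]? with
      | none => rw [hc] at h; simp at h
      | some c =>
        rw [hc] at h; simp only [Option.bind_some] at h
        obtain ⟨hi, hg⟩ := get_eq_of_getElem? hc
        refine ⟨⟨i, hi⟩, ?_⟩
        cases q with
        | nil => exact Or.inl rfl
        | cons j r =>
          exact Or.inr ⟨j :: r, mem_edgeS.2 ⟨by simp, by rw [hg]; exact h⟩, rfl⟩
    · rintro ⟨i, hi | ⟨e, he, hpe⟩⟩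
      · injection hi with h1 h2
        subst h1; subst h2
        rw [sub_node_cons_fin, sub_nil]; rfl
      · injection hpe with h1 h2
        subst h1; subst h2
        rw [sub_node_cons_fin]
        exact (mem_edgeS.1 he).2

end CTree
end AuxDev
section AuxDev2
namespace CTree
variable {α : Type}

/-- Total sum of coordinates over uncolored vertices. -/
def Stot (t : CTree α) (x : List ℕ → ℝ) : ℝ := ∑ p ∈ uncS t, x p

/-- Restriction to the `i`-th principal subtree. -/
def res (i : ℕ) (x : List ℕ → ℝ) : List ℕ → ℝ := fun q => x (i :: q)

/-- Extension by zero from the `i`-th principal subtree. -/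
def liftR (i : ℕ) (y : List ℕ → ℝ) : List ℕ → ℝ := fun p =>
  match p with
  | [] => 0
  | j :: q => if j = i then y q else 0

/-- Indicator of the root. -/
def e0R : List ℕ → ℝ := fun p => if p = [] then 1 else 0

lemma uncS_node_eq (ts : List (CTree α)) :
    uncS (node ts) = insert ([] : List ℕ)
      (Finset.univ.biUnion fun i : Fin ts.length => (uncS (ts.get i)).image (i.1 :: ·)) := by
  ext p
  simp only [Finset.mem_insert, Finset.mem_biUnion, Finset.mem_univ, true_and,
    Finset.mem_image]
  rw [mem_uncS_node]
  constructor
  · rintro (rfl | ⟨i, q, hq, rfl⟩)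
    · exact Or.inl rfl
    · exact Or.inr ⟨i, q, hq, rfl⟩
  · rintro (rfl | ⟨i, q, hq, rfl⟩)
    · exact Or.inl rfl
    · exact Or.inr ⟨i, q, hq, rfl⟩

lemma sum_uncS_node (ts : List (CTree α)) (f : List ℕ → ℝ) :
    ∑ p ∈ uncS (node ts), f p
      = f [] + ∑ i : Fin ts.length, ∑ q ∈ uncS (ts.get i), f (i.1 :: q) := by
  rw [uncS_node_eq, Finset.sum_insert, Finset.sum_biUnion]
  · refine congrArg (fun z => f [] + z) ?_
    refine Finset.sum_congr rfl fun i _ => ?_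
    exact Finset.sum_image (fun a _ b _ h => ((List.cons.injEq _ _ _ _).mp h).2)
  · intro i _ j _ hij
    refine Finset.disjoint_left.2 fun p hpi hpj => ?_
    obtain ⟨a, _, rfl⟩ := Finset.mem_image.1 hpi
    obtain ⟨b, _, hb⟩ := Finset.mem_image.1 hpj
    injection hb with h1 h2
    exact hij (Fin.ext h1.symm)
  · intro hmem
    obtain ⟨i, -, hm⟩ := Finset.mem_biUnion.1 hmem
    obtain ⟨q, -, hq⟩ := Finset.mem_image.1 hm
    exact nomatch hq

lemma Stot_node (ts : List (CTree α)) (x : List ℕ → ℝ) :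
    Stot (node ts) x = x [] + ∑ i : Fin ts.length, Stot (ts.get i) (res i.1 x) :=
  sum_uncS_node ts x

lemma nil_mem_uncS_node (ts : List (CTree α)) : ([] : List ℕ) ∈ uncS (node ts) :=
  mem_uncS.2 ⟨ts, by rw [sub_nil]⟩

lemma pairR_eval (t : CTree α) (d : List ℕ) (x : List ℕ → ℝ) :
    pairR t (wt t d) x
      = ∑ p ∈ uncS t, (if d.dropLast <+: p ∧ ¬ d <+: p then x p else 0) := by
  unfold pairR wt
  refine Finset.sum_congr rfl fun p hp => ?_
  by_cases h : d.dropLast <+: p ∧ ¬ d <+: p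
  · rw [if_pos ⟨hp, h.1, h.2⟩, if_pos h]
    simp
  · rw [if_neg (fun hc => h ⟨hc.2.1, hc.2.2⟩), if_neg h]
    simp

lemma pairR_wt_single (ts : List (CTree α)) (i : Fin ts.length) (x : List ℕ → ℝ) :
    pairR (node ts) (wt (node ts) [i.1]) x
      = Stot (node ts) x - Stot (ts.get i) (res i.1 x) := by
  rw [pairR_eval, sum_uncS_node, Stot_node]
  have hc0 : ([i.1].dropLast <+: ([] : List ℕ)) ∧ ¬ [i.1] <+: ([] : List ℕ) := by
    refine ⟨by simp, fun hc => ?_⟩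
    rw [List.prefix_nil] at hc
    exact nomatch hc
  rw [if_pos hc0]
  have hterm : ∀ j : Fin ts.length,
      (∑ q ∈ uncS (ts.get j), if ([i.1].dropLast <+: (j.1 :: q)) ∧ ¬ [i.1] <+: (j.1 :: q)
        then x (j.1 :: q) else 0)
      = Stot (ts.get j) (res j.1 x) - (if j = i then Stot (ts.get i) (res i.1 x) else 0) := by
    intro j
    by_cases hji : j = i
    · subst hji
      rw [if_pos rfl, sub_self]
      refine Finset.sum_eq_zero fun q _ => ?_
      rw [if_neg]
      rintro ⟨-, hpre⟩
      exact hpre (by simp [List.cons_prefix_cons])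
    · rw [if_neg hji, sub_zero]
      refine Finset.sum_congr rfl fun q _ => if_pos ?_
      refine ⟨by simp, fun hc => ?_⟩
      rw [List.cons_prefix_cons] at hc
      exact hji (Fin.ext hc.1.symm)
  rw [Finset.sum_congr rfl fun j _ => hterm j, Finset.sum_sub_distrib,
    Finset.sum_ite_eq' Finset.univ i (fun _ => Stot (ts.get i) (res i.1 x))]
  simp only [Finset.mem_univ, if_pos]
  ring

lemma pairR_wt_deep (ts : List (CTree α)) (i : Fin ts.length) (e : List ℕ) (he : e ≠ [])
    (x : List ℕ → ℝ) :
    pairR (node ts) (wt (node ts) (i.1 :: e)) x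
      = pairR (ts.get i) (wt (ts.get i) e) (res i.1 x) := by
  obtain ⟨a, l, rfl⟩ : ∃ a l, e = a :: l := by
    cases e with
    | nil => exact absurd rfl he
    | cons a l => exact ⟨a, l, rfl⟩
  have hdl : (i.1 :: a :: l).dropLast = i.1 :: (a :: l).dropLast := rfl
  rw [pairR_eval, pairR_eval, sum_uncS_node]
  have hc0 : ¬ (((i.1 :: a :: l).dropLast <+: ([] : List ℕ))
      ∧ ¬ (i.1 :: a :: l) <+: ([] : List ℕ)) := by
    rintro ⟨h1, -⟩
    rw [hdl, List.prefix_nil] at h1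
    exact nomatch h1
  rw [if_neg hc0, zero_add]
  have hterm : ∀ j : Fin ts.length,
      (∑ q ∈ uncS (ts.get j), if ((i.1 :: a :: l).dropLast <+: (j.1 :: q))
        ∧ ¬ (i.1 :: a :: l) <+: (j.1 :: q) then x (j.1 :: q) else 0)
      = if j = i then (∑ q ∈ uncS (ts.get i),
          if ((a :: l).dropLast <+: q) ∧ ¬ (a :: l) <+: q then res i.1 x q else 0) else 0 := by
    intro j
    by_cases hji : j = i
    · subst hji
      rw [if_pos rfl]
      refine Finset.sum_congr rfl fun q _ => ?_
      rw [hdl]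
      simp only [List.cons_prefix_cons, true_and]
      rfl
    · rw [if_neg hji]
      refine Finset.sum_eq_zero fun q _ => if_neg ?_
      rintro ⟨h1, -⟩
      rw [hdl, List.cons_prefix_cons] at h1
      exact hji (Fin.ext h1.1.symm)
  rw [Finset.sum_congr rfl fun j _ => hterm j,
    Finset.sum_ite_eq' Finset.univ i
      (fun _ => ∑ q ∈ uncS (ts.get i),
        if ((a :: l).dropLast <+: q) ∧ ¬ (a :: l) <+: q then res i.1 x q else 0)]
  simp only [Finset.mem_univ, if_pos]

lemma mem_dualCone_iff (t : CTree α) (x : List ℕ → ℝ) :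
    x ∈ dualCone t ↔ (∀ p, p ∉ uncS t → x p = 0) ∧ ∀ d ∈ edgeS t, 0 ≤ pairR t (wt t d) x :=
  Iff.rfl

lemma mem_dualCone_node (ts : List (CTree α)) (x : List ℕ → ℝ) :
    x ∈ dualCone (node ts) ↔ (∀ p, p ∉ uncS (node ts) → x p = 0)
      ∧ (∀ i : Fin ts.length, res i.1 x ∈ dualCone (ts.get i))
      ∧ (∀ i : Fin ts.length, Stot (ts.get i) (res i.1 x) ≤ Stot (node ts) x) := by
  rw [mem_dualCone_iff]
  constructor
  · rintro ⟨hv, hd⟩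
    refine ⟨hv, fun i => ⟨?_, ?_⟩, fun i => ?_⟩
    · intro q hq
      refine hv (i.1 :: q) ?_
      rw [mem_uncS_node]
      rintro (h | ⟨j, q', hq', hcons⟩)
      · exact nomatch h
      · injection hcons with h1 h2
        exact hq (by rw [← Fin.ext h1] at hq'; rwa [h2])
    · intro e hee
      rw [← pairR_wt_deep ts i e (mem_edgeS.1 hee).1 x]
      refine hd (i.1 :: e) (mem_edgeS_node.2 ⟨i, Or.inr ⟨e, hee, rfl⟩⟩)
    · have := hd [i.1] (mem_edgeS_node.2 ⟨i, Or.inl rfl⟩)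
      rw [pairR_wt_single] at this
      linarith
  · rintro ⟨hv, hres, hS⟩
    refine ⟨hv, fun d hd => ?_⟩
    obtain ⟨i, hi | ⟨e, he, rfl⟩⟩ := mem_edgeS_node.1 hd
    · subst hi
      rw [pairR_wt_single]
      have := hS i
      linarith
    · rw [pairR_wt_deep ts i e (mem_edgeS.1 he).1 x]
      exact (hres i).2 e he

end CTree
end AuxDev2
section AuxDev3
namespace CTree
variable {α : Type}

lemma Stot_add (t : CTree α) (x y : List ℕ → ℝ) :
    Stot t (x + y) = Stot t x + Stot t y := by
  unfold Stot; rw [← Finset.sum_add_distrib]; rfl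

lemma Stot_smul (t : CTree α) (c : ℝ) (x : List ℕ → ℝ) :
    Stot t (c • x) = c * Stot t x := by
  unfold Stot; rw [Finset.mul_sum]; rfl

lemma Stot_zero (t : CTree α) : Stot t (0 : List ℕ → ℝ) = 0 := by
  unfold Stot; simp

lemma pairR_add (t : CTree α) (μ : List ℕ → ℤ) (x y : List ℕ → ℝ) :
    pairR t μ (x + y) = pairR t μ x + pairR t μ y := by
  unfold pairR; rw [← Finset.sum_add_distrib]
  exact Finset.sum_congr rfl fun p _ => by simp [Pi.add_apply]; ring

lemma pairR_smul (t : CTree α) (μ : List ℕ → ℤ) (c : ℝ) (x : List ℕ → ℝ) :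
    pairR t μ (c • x) = c * pairR t μ x := by
  unfold pairR; rw [Finset.mul_sum]
  exact Finset.sum_congr rfl fun p _ => by simp [Pi.smul_apply]; ring

lemma pairR_sub (t : CTree α) (μ : List ℕ → ℤ) (x y : List ℕ → ℝ) :
    pairR t μ (x - y) = pairR t μ x - pairR t μ y := by
  unfold pairR; rw [← Finset.sum_sub_distrib]
  exact Finset.sum_congr rfl fun p _ => by simp [Pi.sub_apply]; ring

lemma pairR_zero (t : CTree α) (μ : List ℕ → ℤ) : pairR t μ (0 : List ℕ → ℝ) = 0 := by
  unfold pairR; simp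

lemma dualCone_add {t : CTree α} {x y : List ℕ → ℝ}
    (hx : x ∈ dualCone t) (hy : y ∈ dualCone t) : x + y ∈ dualCone t := by
  refine ⟨fun p hp => ?_, fun d hd => ?_⟩
  · show x p + y p = 0
    rw [hx.1 p hp, hy.1 p hp, add_zero]
  · rw [pairR_add]
    exact add_nonneg (hx.2 d hd) (hy.2 d hd)

lemma dualCone_smul {t : CTree α} {c : ℝ} (hc : 0 ≤ c) {x : List ℕ → ℝ}
    (hx : x ∈ dualCone t) : c • x ∈ dualCone t := by
  refine ⟨fun p hp => ?_, fun d hd => ?_⟩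
  · show c * x p = 0
    rw [hx.1 p hp, mul_zero]
  · rw [pairR_smul]
    exact mul_nonneg hc (hx.2 d hd)

lemma dualCone_zero (t : CTree α) : (0 : List ℕ → ℝ) ∈ dualCone t :=
  ⟨fun _ _ => rfl, fun d hd => le_of_eq (pairR_zero t _).symm⟩

lemma mem_ray_self (v : List ℕ → ℝ) : v ∈ ray v := ⟨1, zero_le_one, (one_smul _ _).symm⟩

lemma zero_mem_ray (v : List ℕ → ℝ) : (0 : List ℕ → ℝ) ∈ ray v :=
  ⟨0, le_refl 0, (zero_smul _ _).symm⟩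

lemma ray_smul_pos {c : ℝ} (hc : 0 < c) (v : List ℕ → ℝ) : ray (c • v) = ray v := by
  ext x
  constructor
  · rintro ⟨d, hd, rfl⟩
    exact ⟨d * c, mul_nonneg hd hc.le, smul_smul d c v⟩
  · rintro ⟨d, hd, rfl⟩
    exact ⟨d / c, div_nonneg hd hc.le, by rw [smul_smul, div_mul_cancel₀ _ (ne_of_gt hc)]⟩

lemma ray_subset_dualCone {t : CTree α} {v : List ℕ → ℝ} (hv : v ∈ dualCone t) :
    ray v ⊆ dualCone t := by
  rintro x ⟨c, hc, rfl⟩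
  exact dualCone_smul hc hv

lemma res_liftR_self (i : ℕ) (y : List ℕ → ℝ) : res i (liftR i y) = y :=
  funext fun q => if_pos rfl

lemma res_liftR_ne {i j : ℕ} (h : j ≠ i) (y : List ℕ → ℝ) : res j (liftR i y) = 0 :=
  funext fun q => if_neg h

lemma liftR_nil (i : ℕ) (y : List ℕ → ℝ) : liftR i y [] = 0 := rfl

lemma res_e0R (i : ℕ) : res i e0R = 0 := funext fun q => by simp [res, e0R]

lemma e0R_nil : e0R [] = 1 := rfl

lemma Stot_e0R_node (ts : List (CTree α)) : Stot (node ts) e0R = 1 := by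
  rw [Stot_node]
  simp [res_e0R, Stot_zero, e0R_nil]

lemma Stot_liftR (ts : List (CTree α)) (i : Fin ts.length) (y : List ℕ → ℝ) :
    Stot (node ts) (liftR i.1 y) = Stot (ts.get i) y := by
  rw [Stot_node, liftR_nil, zero_add]
  have : ∀ j : Fin ts.length, Stot (ts.get j) (res j.1 (liftR i.1 y))
      = if j = i then Stot (ts.get i) y else 0 := by
    intro j
    by_cases hji : j = i
    · subst hji; rw [if_pos rfl, res_liftR_self]
    · rw [if_neg hji, res_liftR_ne (fun hc => hji (Fin.ext hc)) y, Stot_zero]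
  rw [Finset.sum_congr rfl fun j _ => this j,
    Finset.sum_ite_eq' Finset.univ i (fun _ => Stot (ts.get i) y)]
  simp

lemma uncS_leaf (a : α) : uncS (leaf a) = ∅ := by
  ext p
  simp only [mem_uncS, Finset.notMem_empty, iff_false]
  rintro ⟨us, hus⟩
  cases p with
  | nil => rw [sub_nil] at hus; simp at hus
  | cons i q => simp [sub] at hus

lemma mem_dualCone_leaf {a : α} {x : List ℕ → ℝ} : x ∈ dualCone (leaf a) ↔ x = 0 := by
  constructor
  · intro h
    funext p
    exact h.1 p (by rw [uncS_leaf]; exact Finset.notMem_empty p)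
  · rintro rfl
    exact dualCone_zero _

lemma isColoredTree_child {ts : List (CTree α)} (h : IsColoredTree (node ts))
    (i : Fin ts.length) {cs : List (CTree α)} (hc : ts.get i = node cs) :
    IsColoredTree (ts.get i) := by
  refine ⟨fun p hp => ?_, cs, hc⟩
  exact h.1 (i.1 :: p) (by rw [sub_node_cons_fin]; exact hp)

lemma ne_nil_of_isColoredTree {ts : List (CTree α)} (h : IsColoredTree (node ts)) :
    ts ≠ [] := by
  intro hc
  exact h.1 [] (by rw [sub_nil, hc])

lemma Stot_key : ∀ (n : ℕ) (t : CTree α), sizeOf t ≤ n → IsColoredTree t →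
    ∀ x ∈ dualCone t, 0 ≤ Stot t x ∧ (Stot t x = 0 → x = 0) := by
  intro n
  induction n with
  | zero => intro t hsz; exact absurd hsz (by have := sizeOf_pos' t; omega)
  | succ n ih =>
    intro t hsz hct x hx
    obtain ⟨ts, rfl⟩ := hct.2
    have hne : ts ≠ [] := ne_nil_of_isColoredTree hct
    rw [mem_dualCone_node] at hx
    obtain ⟨hv, hres, hS⟩ := hx
    have hchild : ∀ i : Fin ts.length, 0 ≤ Stot (ts.get i) (res i.1 x)
        ∧ (Stot (ts.get i) (res i.1 x) = 0 → res i.1 x = 0) := by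
      intro i
      cases hgi : ts.get i with
      | leaf a =>
        have h0 : res i.1 x = 0 := mem_dualCone_leaf.1 (by rw [← hgi]; exact hres i)
        rw [h0, Stot_zero]
        exact ⟨le_refl 0, fun _ => rfl⟩
      | node cs =>
        have hsz' : sizeOf (ts.get i) ≤ n := by
          have h1 : sizeOf (ts.get i) < sizeOf ts :=
            List.sizeOf_lt_of_mem (List.get_mem ts i)
          have h2 : sizeOf (node ts) = 1 + sizeOf ts := by simp
          omega
        rw [← hgi]
        exact ih (ts.get i) hsz' (isColoredTree_child hct i hgi) _ (hres i)
    have hlen : 0 < ts.length := List.length_pos_iff.2 hne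
    let i0 : Fin ts.length := ⟨0, hlen⟩
    refine ⟨le_trans (hchild i0).1 (hS i0), fun hzero => ?_⟩
    have hzi : ∀ i : Fin ts.length, res i.1 x = 0 := fun i =>
      (hchild i).2 (le_antisymm (by rw [← hzero]; exact hS i) (hchild i).1)
    have hzS : ∀ i : Fin ts.length, Stot (ts.get i) (res i.1 x) = 0 := fun i => by
      rw [hzi i, Stot_zero]
    have hx0 : x [] = 0 := by
      have h1 := Stot_node ts x
      rw [hzero, Finset.sum_congr rfl fun i _ => hzS i, Finset.sum_const, smul_zero] at h1
      linarith
    funext p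
    show x p = 0
    by_cases hp : p ∈ uncS (node ts)
    · rcases mem_uncS_node.1 hp with rfl | ⟨i, q, hq, rfl⟩
      · exact hx0
      · exact congrFun (hzi i) q
    · exact hv p hp

lemma Stot_nonneg {t : CTree α} (hct : IsColoredTree t) {x : List ℕ → ℝ}
    (hx : x ∈ dualCone t) : 0 ≤ Stot t x :=
  (Stot_key (sizeOf t) t le_rfl hct x hx).1

lemma eq_zero_of_Stot_eq_zero {t : CTree α} (hct : IsColoredTree t) {x : List ℕ → ℝ}
    (hx : x ∈ dualCone t) (h0 : Stot t x = 0) : x = 0 :=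
  (Stot_key (sizeOf t) t le_rfl hct x hx).2 h0

lemma Stot_pos {t : CTree α} (hct : IsColoredTree t) {x : List ℕ → ℝ}
    (hx : x ∈ dualCone t) (hx0 : x ≠ 0) : 0 < Stot t x :=
  lt_of_le_of_ne (Stot_nonneg hct hx) (fun h => hx0 (eq_zero_of_Stot_eq_zero hct hx h.symm))

lemma pointed {t : CTree α} (hct : IsColoredTree t) {x y : List ℕ → ℝ}
    (hx : x ∈ dualCone t) (hy : y ∈ dualCone t) (hxy : x + y = 0) : x = 0 ∧ y = 0 := by
  have h1 : Stot t x + Stot t y = 0 := by rw [← Stot_add, hxy, Stot_zero]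
  have h2 := Stot_nonneg hct hx
  have h3 := Stot_nonneg hct hy
  exact ⟨eq_zero_of_Stot_eq_zero hct hx (by linarith),
    eq_zero_of_Stot_eq_zero hct hy (by linarith)⟩

end CTree
end AuxDev3
section AuxDev4
namespace CTree
variable {α : Type}

lemma ray_eq_of_mem {v v' : List ℕ → ℝ} (h : v' ∈ ray v) (h0 : v' ≠ 0) :
    ray v' = ray v := by
  obtain ⟨c, hc, rfl⟩ := h
  have hcpos : 0 < c := by
    rcases lt_or_eq_of_le hc with h | h
    · exact h
    · exact absurd (h ▸ zero_smul ℝ v) h0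
  exact ray_smul_pos hcpos v

lemma face_rep {t : CTree α} {F : Set (List ℕ → ℝ)} (hF : IsOneDimFace (dualCone t) F) :
    ∃ v, v ≠ 0 ∧ F = ray v ∧ v ∈ dualCone t := by
  obtain ⟨v, h1, h2⟩ := hF.2.1
  exact ⟨v, h1, h2, hF.1 (h2 ▸ mem_ray_self v)⟩

lemma finite_faces (t : CTree α) :
    Finite {F : Set (List ℕ → ℝ) // IsOneDimFace (dualCone t) F} := by
  classical
  have hrep : ∀ F : {F : Set (List ℕ → ℝ) // IsOneDimFace (dualCone t) F},
      ∃ v, v ≠ 0 ∧ F.1 = ray v ∧ v ∈ dualCone t := fun F => face_rep F.2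
  choose v hv0 hvF hvC using hrep
  let f : {F : Set (List ℕ → ℝ) // IsOneDimFace (dualCone t) F}
      → ({d // d ∈ edgeS t} → Prop) :=
    fun F d => pairR t (wt t d.1) (v F) = 0
  have hinj : Function.Injective f := by
    intro F G hfg
    have hiff : ∀ d ∈ edgeS t,
        (pairR t (wt t d) (v F) = 0 ↔ pairR t (wt t d) (v G) = 0) := by
      intro d hd
      exact iff_of_eq (congrFun hfg ⟨d, hd⟩)
    obtain ⟨ε, hε0, hε⟩ : ∃ ε : ℝ, 0 < ε ∧ ∀ d ∈ edgeS t,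
        0 < pairR t (wt t d) (v F) →
        ε * pairR t (wt t d) (v G) ≤ pairR t (wt t d) (v F) := by
      set S := (edgeS t).filter
        (fun d => 0 < pairR t (wt t d) (v F) ∧ 0 < pairR t (wt t d) (v G)) with hS
      by_cases hne : S.Nonempty
      · obtain ⟨d0, hd0, hmin⟩ := Finset.exists_min_image S
          (fun d => pairR t (wt t d) (v F) / pairR t (wt t d) (v G)) hne
        have hd0' := Finset.mem_filter.1 hd0
        refine ⟨_, div_pos hd0'.2.1 hd0'.2.2, fun d hd hdF => ?_⟩
        rcases le_or_gt (pairR t (wt t d) (v G)) 0 with hG | hG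
        · calc _ ≤ (0:ℝ) := mul_nonpos_of_nonneg_of_nonpos (div_pos hd0'.2.1 hd0'.2.2).le hG
            _ ≤ _ := hdF.le
        · have hdS : d ∈ S := Finset.mem_filter.2 ⟨hd, hdF, hG⟩
          have := hmin d hdS
          exact (le_div_iff₀ hG).1 this
      · refine ⟨1, one_pos, fun d hd hdF => ?_⟩
        rcases le_or_gt (pairR t (wt t d) (v G)) 0 with hG | hG
        · linarith
        · exact absurd (Finset.mem_filter.2 ⟨hd, hdF, hG⟩) (fun hc => hne ⟨d, hc⟩)
    have hsub : v F - ε • v G ∈ dualCone t := by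
      refine ⟨fun p hp => ?_, fun d hd => ?_⟩
      · show v F p - (ε • v G) p = 0
        have h1 := (hvC F).1 p hp
        have h2 := (hvC G).1 p hp
        simp [h1, h2]
      · rw [pairR_sub, pairR_smul]
        rcases lt_or_eq_of_le ((hvC F).2 d hd) with hF | hFeq
        · have := hε d hd hF
          linarith
        · have hG0 : pairR t (wt t d) (v G) = 0 := (hiff d hd).1 hFeq.symm
          rw [← hFeq, hG0, mul_zero, sub_zero]
    have hsum : (v F - ε • v G) + ε • v G ∈ F.1 := by
      rw [sub_add_cancel, hvF F]
      exact mem_ray_self (v F)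
    obtain ⟨-, h2⟩ := F.2.2.2 _ hsub _ (dualCone_smul hε0.le (hvC G)) hsum
    have hmem : ε • v G ∈ ray (v F) := (hvF F) ▸ h2
    have hne : ε • v G ≠ 0 := smul_ne_zero (ne_of_gt hε0) (hv0 G)
    have hrayeq : ray (v G) = ray (v F) := by
      rw [← ray_eq_of_mem hmem hne, ray_smul_pos hε0]
    exact Subtype.ext (by rw [hvF F, hvF G, hrayeq])
  exact Finite.of_injective f hinj

end CTree
end AuxDev4
section AuxDev5
namespace CTree
variable {α : Type}

lemma child_nonneg {ts : List (CTree α)} (hct : IsColoredTree (node ts))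
    (i : Fin ts.length) {y : List ℕ → ℝ} (hy : y ∈ dualCone (ts.get i)) :
    0 ≤ Stot (ts.get i) y := by
  cases hgi : ts.get i with
  | leaf a =>
    rw [hgi] at hy
    rw [mem_dualCone_leaf.1 hy, Stot_zero]
  | node cs =>
    rw [← hgi]
    exact Stot_nonneg (isColoredTree_child hct i hgi) hy

lemma child_zero_of_Stot {ts : List (CTree α)} (hct : IsColoredTree (node ts))
    (i : Fin ts.length) {y : List ℕ → ℝ} (hy : y ∈ dualCone (ts.get i))
    (h : Stot (ts.get i) y = 0) : y = 0 := by
  cases hgi : ts.get i with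
  | leaf a =>
    rw [hgi] at hy
    exact mem_dualCone_leaf.1 hy
  | node cs =>
    exact eq_zero_of_Stot_eq_zero (isColoredTree_child hct i hgi) hy h

lemma child_pos {ts : List (CTree α)} (hct : IsColoredTree (node ts))
    (i : Fin ts.length) {y : List ℕ → ℝ} (hy : y ∈ dualCone (ts.get i))
    (h0 : y ≠ 0) : 0 < Stot (ts.get i) y :=
  lt_of_le_of_ne (child_nonneg hct i hy) (fun h => h0 (child_zero_of_Stot hct i hy h.symm))

lemma child_pointed {ts : List (CTree α)} (hct : IsColoredTree (node ts))
    (i : Fin ts.length) {y z : List ℕ → ℝ} (hy : y ∈ dualCone (ts.get i))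
    (hz : z ∈ dualCone (ts.get i)) (hyz : y + z = 0) : y = 0 ∧ z = 0 := by
  have h1 : Stot (ts.get i) y + Stot (ts.get i) z = 0 := by
    rw [← Stot_add, hyz, Stot_zero]
  have h2 := child_nonneg hct i hy
  have h3 := child_nonneg hct i hz
  exact ⟨child_zero_of_Stot hct i hy (by linarith), child_zero_of_Stot hct i hz (by linarith)⟩

/-- The master decomposition of a vector into root coordinate and subtree parts. -/
def mast (ts : List (CTree α)) (c0 : ℝ) (y : Fin ts.length → (List ℕ → ℝ)) :
    List ℕ → ℝ :=
  c0 • e0R + ∑ i : Fin ts.length, liftR i.1 (y i)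

lemma mast_apply_nil (ts : List (CTree α)) (c0 : ℝ) (y : Fin ts.length → (List ℕ → ℝ)) :
    mast ts c0 y [] = c0 := by
  simp [mast, Finset.sum_apply, e0R, liftR_nil]

lemma mast_apply_cons (ts : List (CTree α)) (c0 : ℝ) (y : Fin ts.length → (List ℕ → ℝ))
    (j : ℕ) (q : List ℕ) :
    mast ts c0 y (j :: q) = ∑ i : Fin ts.length, (if j = i.1 then y i q else 0) := by
  simp [mast, Finset.sum_apply, e0R, liftR]

lemma mast_cons_lt (ts : List (CTree α)) (c0 : ℝ) (y : Fin ts.length → (List ℕ → ℝ))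
    {j : ℕ} (hj : j < ts.length) (q : List ℕ) :
    mast ts c0 y (j :: q) = y ⟨j, hj⟩ q := by
  rw [mast_apply_cons]
  have h : ∀ i : Fin ts.length, (if j = i.1 then y i q else 0)
      = (if i = ⟨j, hj⟩ then y ⟨j, hj⟩ q else 0) := by
    intro i
    by_cases hc : i = (⟨j, hj⟩ : Fin ts.length)
    · subst hc; rw [if_pos rfl, if_pos rfl]
    · rw [if_neg hc, if_neg (fun hc2 => hc (Fin.ext hc2.symm))]
  rw [Finset.sum_congr rfl fun i _ => h i,
    Finset.sum_ite_eq' Finset.univ (⟨j, hj⟩ : Fin ts.length) (fun _ => y ⟨j, hj⟩ q)]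
  simp

lemma mast_cons_ge (ts : List (CTree α)) (c0 : ℝ) (y : Fin ts.length → (List ℕ → ℝ))
    {j : ℕ} (hj : ts.length ≤ j) (q : List ℕ) :
    mast ts c0 y (j :: q) = 0 := by
  rw [mast_apply_cons]
  refine Finset.sum_eq_zero fun i _ => if_neg (fun hc => ?_)
  have := i.2
  omega

lemma mast_res (ts : List (CTree α)) (c0 : ℝ) (y : Fin ts.length → (List ℕ → ℝ))
    (j : Fin ts.length) : res j.1 (mast ts c0 y) = y j := by
  funext q
  show mast ts c0 y (j.1 :: q) = y j q
  rw [mast_cons_lt ts c0 y j.2 q]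

lemma mast_Stot (ts : List (CTree α)) (c0 : ℝ) (y : Fin ts.length → (List ℕ → ℝ)) :
    Stot (node ts) (mast ts c0 y) = c0 + ∑ i : Fin ts.length, Stot (ts.get i) (y i) := by
  rw [Stot_node, mast_apply_nil]
  exact congrArg (c0 + ·) (Finset.sum_congr rfl fun i _ => by rw [mast_res])

lemma liftR_add (i : ℕ) (a b : List ℕ → ℝ) :
    liftR i (a + b) = liftR i a + liftR i b := by
  funext p
  cases p with
  | nil => show (0:ℝ) = 0 + 0; rw [add_zero]
  | cons j q =>
    show (if j = i then (a + b) q else 0) = (if j = i then a q else 0) + (if j = i then b q else 0)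
    by_cases h : j = i <;> simp [h]

lemma liftR_sub (i : ℕ) (a b : List ℕ → ℝ) :
    liftR i (a - b) = liftR i a - liftR i b := by
  funext p
  cases p with
  | nil => show (0:ℝ) = 0 - 0; rw [sub_zero]
  | cons j q =>
    show (if j = i then (a - b) q else 0) = (if j = i then a q else 0) - (if j = i then b q else 0)
    by_cases h : j = i <;> simp [h]

lemma liftR_smul (i : ℕ) (c : ℝ) (a : List ℕ → ℝ) :
    liftR i (c • a) = c • liftR i a := by
  funext p
  cases p with
  | nil => show (0:ℝ) = c * 0; rw [mul_zero]
  | cons j q =>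
    show (if j = i then (c • a) q else 0) = c * (if j = i then a q else 0)
    by_cases h : j = i <;> simp [h]

lemma mast_add (ts : List (CTree α)) (c0 c0' : ℝ) (y y' : Fin ts.length → (List ℕ → ℝ)) :
    mast ts c0 y + mast ts c0' y' = mast ts (c0 + c0') (fun i => y i + y' i) := by
  unfold mast
  simp only [liftR_add]
  rw [Finset.sum_add_distrib, add_smul]
  abel

lemma mast_sub (ts : List (CTree α)) (c0 c0' : ℝ) (y y' : Fin ts.length → (List ℕ → ℝ)) :
    mast ts c0 y - mast ts c0' y' = mast ts (c0 - c0') (fun i => y i - y' i) := by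
  unfold mast
  simp only [liftR_sub]
  rw [Finset.sum_sub_distrib, sub_smul]
  abel

lemma mast_smul (ts : List (CTree α)) (c c0 : ℝ) (y : Fin ts.length → (List ℕ → ℝ)) :
    c • mast ts c0 y = mast ts (c * c0) (fun i => c • y i) := by
  unfold mast
  simp only [liftR_smul]
  rw [smul_add, smul_smul, Finset.smul_sum]

lemma not_mem_uncS_node_ge {ts : List (CTree α)} {j : ℕ} (hj : ts.length ≤ j)
    (q : List ℕ) : (j :: q) ∉ uncS (node ts) := by
  intro hmem
  rcases mem_uncS_node.1 hmem with h | ⟨i, q', hq', heq⟩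
  · exact nomatch h
  · injection heq with h1 h2
    have := i.2
    omega

lemma decomp {ts : List (CTree α)} {x : List ℕ → ℝ}
    (hv : ∀ p, p ∉ uncS (node ts) → x p = 0) :
    x = mast ts (x []) (fun i => res i.1 x) := by
  funext p
  cases p with
  | nil => rw [mast_apply_nil]
  | cons j q =>
    by_cases hj : j < ts.length
    · rw [mast_cons_lt ts _ _ hj q]; rfl
    · rw [mast_cons_ge ts _ _ (by omega) q]
      exact hv _ (not_mem_uncS_node_ge (by omega) q)

lemma mast_mem {ts : List (CTree α)} {c0 : ℝ} {y : Fin ts.length → (List ℕ → ℝ)}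
    (hy : ∀ i, y i ∈ dualCone (ts.get i))
    (hc : ∀ j : Fin ts.length, Stot (ts.get j) (y j)
      ≤ c0 + ∑ i : Fin ts.length, Stot (ts.get i) (y i)) :
    mast ts c0 y ∈ dualCone (node ts) := by
  rw [mem_dualCone_node]
  refine ⟨fun p hp => ?_, fun i => ?_, fun i => ?_⟩
  · cases p with
    | nil => exact absurd (nil_mem_uncS_node ts) hp
    | cons j q =>
      by_cases hj : j < ts.length
      · rw [mast_cons_lt ts _ _ hj q]
        refine (hy ⟨j, hj⟩).1 q (fun hq => hp ?_)
        exact mem_uncS_node.2 (Or.inr ⟨⟨j, hj⟩, q, hq, rfl⟩)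
      · exact mast_cons_ge ts _ _ (by omega) q
  · rw [mast_res]; exact hy i
  · rw [mast_res, mast_Stot]; exact hc i

end CTree
end AuxDev5
section AuxDev6
namespace CTree
variable {α : Type}

lemma res_add' (i : ℕ) (x y : List ℕ → ℝ) : res i (x + y) = res i x + res i y := rfl

lemma res_smul' (i : ℕ) (c : ℝ) (x : List ℕ → ℝ) : res i (c • x) = c • res i x := rfl

lemma Stot_sub (t : CTree α) (x y : List ℕ → ℝ) :
    Stot t (x - y) = Stot t x - Stot t y := by
  unfold Stot; rw [← Finset.sum_sub_distrib]; rfl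

lemma sub_mast {ts : List (CTree α)} {x : List ℕ → ℝ}
    (hx : ∀ p, p ∉ uncS (node ts) → x p = 0) (c0' : ℝ)
    (y' : Fin ts.length → (List ℕ → ℝ)) :
    x - mast ts c0' y' = mast ts (x [] - c0') (fun j => res j.1 x - y' j) := by
  conv_lhs => rw [decomp hx]
  rw [mast_sub]

lemma stepB {ts : List (CTree α)} (hct : IsColoredTree (node ts)) {v : List ℕ → ℝ}
    (hvC : v ∈ dualCone (node ts)) (hvS : Stot (node ts) v = 1)
    (hext : ∀ X ∈ dualCone (node ts), ∀ Z ∈ dualCone (node ts),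
      X + Z ∈ ray v → X ∈ ray v ∧ Z ∈ ray v) :
    ∀ i : Fin ts.length, res i.1 v ≠ 0 → Stot (ts.get i) (res i.1 v) = 1 := by
  classical
  intro i hi
  have hmemnode := (mem_dualCone_node ts v).1 hvC
  have hsle : ∀ j : Fin ts.length, Stot (ts.get j) (res j.1 v) ≤ 1 :=
    fun j => hvS ▸ hmemnode.2.2 j
  have hs_nonneg : ∀ j : Fin ts.length, 0 ≤ Stot (ts.get j) (res j.1 v) :=
    fun j => child_nonneg hct j (hmemnode.2.1 j)
  have hs_pos : ∀ j : Fin ts.length, res j.1 v ≠ 0 → 0 < Stot (ts.get j) (res j.1 v) :=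
    fun j h => child_pos hct j (hmemnode.2.1 j) h
  set K : Finset (Fin ts.length) := Finset.univ.filter (fun j => res j.1 v ≠ 0) with hK
  have hiK : i ∈ K := by rw [hK]; exact Finset.mem_filter.2 ⟨Finset.mem_univ i, hi⟩
  have hKmem : ∀ j, j ∈ K ↔ res j.1 v ≠ 0 := by
    intro j; rw [hK, Finset.mem_filter]; simp
  -- the comparison vector w
  have hywC : ∀ j : Fin ts.length,
      (if j ∈ K then (Stot (ts.get j) (res j.1 v))⁻¹ • res j.1 v else 0)
        ∈ dualCone (ts.get j) := by
    intro j; by_cases hj : j ∈ K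
    · rw [if_pos hj]; exact dualCone_smul (inv_nonneg.2 (hs_nonneg j)) (hmemnode.2.1 j)
    · rw [if_neg hj]; exact dualCone_zero _
  have hywS : ∀ j : Fin ts.length,
      Stot (ts.get j) (if j ∈ K then (Stot (ts.get j) (res j.1 v))⁻¹ • res j.1 v else 0)
        = if j ∈ K then 1 else 0 := by
    intro j; by_cases hj : j ∈ K
    · rw [if_pos hj, if_pos hj, Stot_smul,
        inv_mul_cancel₀ (ne_of_gt (hs_pos j ((hKmem j).1 hj)))]
    · rw [if_neg hj, if_neg hj, Stot_zero]
  have hSig : ∑ j : Fin ts.length,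
      Stot (ts.get j) (if j ∈ K then (Stot (ts.get j) (res j.1 v))⁻¹ • res j.1 v else 0)
        = (K.card : ℝ) := by
    rw [Finset.sum_congr rfl fun j _ => hywS j, Finset.sum_ite_mem, Finset.univ_inter,
      Finset.sum_const, nsmul_eq_mul, mul_one]
  have hwC : mast ts (1 - (K.card : ℝ))
      (fun j => if j ∈ K then (Stot (ts.get j) (res j.1 v))⁻¹ • res j.1 v else 0)
        ∈ dualCone (node ts) := by
    refine mast_mem hywC fun j => ?_
    rw [hywS j, hSig]
    by_cases hj : j ∈ K
    · rw [if_pos hj]; linarith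
    · rw [if_neg hj]; linarith
  have hwS : Stot (node ts) (mast ts (1 - (K.card : ℝ))
      (fun j => if j ∈ K then (Stot (ts.get j) (res j.1 v))⁻¹ • res j.1 v else 0)) = 1 := by
    rw [mast_Stot, hSig]; ring
  -- epsilon
  have hKne : K.Nonempty := ⟨i, hiK⟩
  have hKims : (K.image (fun j => Stot (ts.get j) (res j.1 v))).Nonempty := hKne.image _
  set ε := (K.image (fun j => Stot (ts.get j) (res j.1 v))).min' hKims with hεdef
  obtain ⟨i0, hi0K, hi0⟩ := Finset.mem_image.1
    ((K.image (fun j => Stot (ts.get j) (res j.1 v))).min'_mem hKims)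
  have hε_pos : 0 < ε := by
    rw [hεdef, ← hi0]; exact hs_pos i0 ((hKmem i0).1 hi0K)
  have hε_le : ∀ j ∈ K, ε ≤ Stot (ts.get j) (res j.1 v) :=
    fun j hj => Finset.min'_le _ _ (Finset.mem_image_of_mem _ hj)
  have hε_le1 : ε ≤ 1 := le_trans (hε_le i0 hi0K) (hsle i0)
  -- z := v - ε • w
  have hzcomp : ∀ j : Fin ts.length,
      (res j.1 v - ε • (if j ∈ K then (Stot (ts.get j) (res j.1 v))⁻¹ • res j.1 v else 0))
        ∈ dualCone (ts.get j)
      ∧ Stot (ts.get j)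
          (res j.1 v - ε • (if j ∈ K then (Stot (ts.get j) (res j.1 v))⁻¹ • res j.1 v else 0))
        = Stot (ts.get j) (res j.1 v) - ε * (if j ∈ K then 1 else 0) := by
    intro j
    by_cases hj : j ∈ K
    · have hsj : 0 < Stot (ts.get j) (res j.1 v) := hs_pos j ((hKmem j).1 hj)
      have heq : res j.1 v - ε • (if j ∈ K then (Stot (ts.get j) (res j.1 v))⁻¹ • res j.1 v else 0)
          = (1 - ε * (Stot (ts.get j) (res j.1 v))⁻¹) • res j.1 v := by
        rw [if_pos hj, smul_smul, sub_smul, one_smul]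
      have hcoef : 0 ≤ 1 - ε * (Stot (ts.get j) (res j.1 v))⁻¹ := by
        have h1 : ε * (Stot (ts.get j) (res j.1 v))⁻¹
            ≤ Stot (ts.get j) (res j.1 v) * (Stot (ts.get j) (res j.1 v))⁻¹ :=
          mul_le_mul_of_nonneg_right (hε_le j hj) (inv_nonneg.2 hsj.le)
        rw [mul_inv_cancel₀ (ne_of_gt hsj)] at h1
        linarith
      refine ⟨heq ▸ dualCone_smul hcoef (hmemnode.2.1 j), ?_⟩
      rw [heq, Stot_smul, if_pos hj, sub_mul, one_mul, mul_assoc,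
        inv_mul_cancel₀ (ne_of_gt hsj), mul_one]
    · have hjz : res j.1 v = 0 := not_not.1 (fun hne => hj ((hKmem j).2 hne))
      rw [if_neg hj, if_neg hj, smul_zero, sub_zero, hjz]
      exact ⟨dualCone_zero _, by rw [Stot_zero, mul_zero, sub_zero]⟩
  have hv1 : v [] + ∑ j : Fin ts.length, Stot (ts.get j) (res j.1 v) = 1 := by
    have h1 := Stot_node ts v
    rw [hvS] at h1
    linarith [h1]
  have hzmem : v - ε • mast ts (1 - (K.card : ℝ))
      (fun j => if j ∈ K then (Stot (ts.get j) (res j.1 v))⁻¹ • res j.1 v else 0)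
        ∈ dualCone (node ts) := by
    rw [mast_smul, sub_mast hvC.1]
    refine mast_mem (fun j => (hzcomp j).1) fun j => ?_
    have hsum2 : ∑ j : Fin ts.length, Stot (ts.get j)
        (res j.1 v - ε • (if j ∈ K then (Stot (ts.get j) (res j.1 v))⁻¹ • res j.1 v else 0))
        = (∑ j : Fin ts.length, Stot (ts.get j) (res j.1 v)) - ε * (K.card : ℝ) := by
      rw [Finset.sum_congr rfl fun j _ => (hzcomp j).2, Finset.sum_sub_distrib]
      congr 1
      rw [← Finset.mul_sum, Finset.sum_ite_mem, Finset.univ_inter, Finset.sum_const,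
        nsmul_eq_mul, mul_one]
    rw [(hzcomp j).2, hsum2]
    by_cases hj : j ∈ K
    · rw [if_pos hj]
      have := hsle j
      linarith [hv1, hε_le1]
    · rw [if_neg hj]
      have h0 : Stot (ts.get j) (res j.1 v) = 0 := by
        rw [not_not.1 (fun hne => hj ((hKmem j).2 hne)), Stot_zero]
      linarith [hv1, hε_le1]
  -- apply extremality
  have hsplit : ε • mast ts (1 - (K.card : ℝ))
      (fun j => if j ∈ K then (Stot (ts.get j) (res j.1 v))⁻¹ • res j.1 v else 0)
      + (v - ε • mast ts (1 - (K.card : ℝ))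
      (fun j => if j ∈ K then (Stot (ts.get j) (res j.1 v))⁻¹ • res j.1 v else 0)) = v := by
    abel
  obtain ⟨hwF, -⟩ := hext _ (dualCone_smul hε_pos.le hwC) _ hzmem
    (by rw [hsplit]; exact mem_ray_self v)
  obtain ⟨c, hc0, hcw⟩ := hwF
  have hcε : c = ε := by
    have h1 := congrArg (Stot (node ts)) hcw
    rw [Stot_smul, Stot_smul, hwS, hvS, mul_one, mul_one] at h1
    exact h1.symm
  have hwv : mast ts (1 - (K.card : ℝ))
      (fun j => if j ∈ K then (Stot (ts.get j) (res j.1 v))⁻¹ • res j.1 v else 0) = v := by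
    have h5 : ε • mast ts (1 - (K.card : ℝ))
        (fun j => if j ∈ K then (Stot (ts.get j) (res j.1 v))⁻¹ • res j.1 v else 0)
        = ε • v := by rw [hcw, hcε]
    exact smul_right_injective (List ℕ → ℝ) (ne_of_gt hε_pos) h5
  have hres_eq : (Stot (ts.get i) (res i.1 v))⁻¹ • res i.1 v = res i.1 v := by
    have h1 := mast_res ts (1 - (K.card : ℝ))
      (fun j => if j ∈ K then (Stot (ts.get j) (res j.1 v))⁻¹ • res j.1 v else 0) i
    rw [hwv, if_pos hiK] at h1
    exact h1.symm
  have h2 : ((Stot (ts.get i) (res i.1 v))⁻¹ - 1) • res i.1 v = 0 := by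
    rw [sub_smul, one_smul, hres_eq, sub_self]
  rcases smul_eq_zero.1 h2 with h3 | h3
  · have h4 : (Stot (ts.get i) (res i.1 v))⁻¹ = 1 := by linarith
    rw [inv_eq_one] at h4
    exact h4
  · exact absurd h3 hi

end CTree
end AuxDev6
section AuxDev7
namespace CTree
variable {α : Type}

lemma stepC {ts : List (CTree α)} (hct : IsColoredTree (node ts)) {v : List ℕ → ℝ}
    (hvC : v ∈ dualCone (node ts)) (hvS : Stot (node ts) v = 1)
    (hext : ∀ X ∈ dualCone (node ts), ∀ Z ∈ dualCone (node ts),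
      X + Z ∈ ray v → X ∈ ray v ∧ Z ∈ ray v)
    (i : Fin ts.length) (hi : res i.1 v ≠ 0)
    (hsi : Stot (ts.get i) (res i.1 v) = 1) :
    IsOneDimFace (dualCone (ts.get i)) (ray (res i.1 v)) := by
  classical
  have hmemnode := (mem_dualCone_node ts v).1 hvC
  have hsle : ∀ j : Fin ts.length, Stot (ts.get j) (res j.1 v) ≤ 1 :=
    fun j => hvS ▸ hmemnode.2.2 j
  have hv1 : v [] + ∑ j : Fin ts.length, Stot (ts.get j) (res j.1 v) = 1 := by
    have h1 := Stot_node ts v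
    rw [hvS] at h1
    linarith [h1]
  refine ⟨ray_subset_dualCone (hmemnode.2.1 i), ⟨res i.1 v, hi, rfl⟩, ?_⟩
  intro y hy z hz hyz
  obtain ⟨c, hc0, hcsum⟩ := hyz
  have hsum : Stot (ts.get i) y + Stot (ts.get i) z = c := by
    have h2 := congrArg (Stot (ts.get i)) hcsum
    rw [Stot_add, Stot_smul, hsi, mul_one] at h2
    exact h2
  -- the extension of an element of the subtree cone
  have hmk : ∀ u : List ℕ → ℝ, u ∈ dualCone (ts.get i) →
      mast ts (Stot (ts.get i) u * v [])
        (fun j => if j = i then u else Stot (ts.get i) u • res j.1 v)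
        ∈ dualCone (node ts) := by
    intro u hu
    have hSu := child_nonneg hct i hu
    have hcompS : ∀ j : Fin ts.length,
        Stot (ts.get j) (if j = i then u else Stot (ts.get i) u • res j.1 v)
          = Stot (ts.get i) u * Stot (ts.get j) (res j.1 v) := by
      intro j
      by_cases hj : j = i
      · subst hj; rw [if_pos rfl, hsi, mul_one]
      · rw [if_neg hj, Stot_smul]
    have hSig : ∑ j : Fin ts.length,
        Stot (ts.get j) (if j = i then u else Stot (ts.get i) u • res j.1 v)
          = Stot (ts.get i) u * ∑ j : Fin ts.length, Stot (ts.get j) (res j.1 v) := by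
      rw [Finset.sum_congr rfl fun j _ => hcompS j, Finset.mul_sum]
    refine mast_mem (fun j => ?_) (fun j => ?_)
    · by_cases hj : j = i
      · subst hj; rw [if_pos rfl]; exact hu
      · rw [if_neg hj]; exact dualCone_smul hSu (hmemnode.2.1 j)
    · rw [hcompS j, hSig]
      have he : Stot (ts.get i) u * v []
          + Stot (ts.get i) u * ∑ j : Fin ts.length, Stot (ts.get j) (res j.1 v)
          = Stot (ts.get i) u := by
        rw [← mul_add, hv1, mul_one]
      have hb : Stot (ts.get i) u * Stot (ts.get j) (res j.1 v)
          ≤ Stot (ts.get i) u * 1 := mul_le_mul_of_nonneg_left (hsle j) hSu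
      rw [mul_one] at hb
      linarith
  -- the two extensions add up to c • v
  have hmksum : mast ts (Stot (ts.get i) y * v [])
        (fun j => if j = i then y else Stot (ts.get i) y • res j.1 v)
      + mast ts (Stot (ts.get i) z * v [])
        (fun j => if j = i then z else Stot (ts.get i) z • res j.1 v)
      = c • v := by
    rw [mast_add]
    conv_rhs => rw [decomp hvC.1]
    rw [mast_smul]
    refine congrArg₂ (mast ts) (by rw [← add_mul, hsum]) (funext fun j => ?_)
    by_cases hj : j = i
    · subst hj
      simp only [if_pos rfl]
      exact hcsum
    · simp only [if_neg hj]
      rw [← add_smul, hsum]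
  obtain ⟨hYF, hZF⟩ := hext _ (hmk y hy) _ (hmk z hz)
    (by rw [hmksum]; exact ⟨c, hc0, rfl⟩)
  obtain ⟨lam, hlam0, hYlam⟩ := hYF
  obtain ⟨mu, hmu0, hZlam⟩ := hZF
  constructor
  · refine ⟨lam, hlam0, ?_⟩
    have h1 := congrArg (res i.1) hYlam
    simp only [mast_res, res_smul', eq_self_iff_true, if_true] at h1
    exact h1
  · refine ⟨mu, hmu0, ?_⟩
    have h1 := congrArg (res i.1) hZlam
    simp only [mast_res, res_smul', eq_self_iff_true, if_true] at h1
    exact h1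

lemma STRUCT {ts : List (CTree α)} (hct : IsColoredTree (node ts)) {F : Set (List ℕ → ℝ)}
    (hF : IsOneDimFace (dualCone (node ts)) F) :
    ∃ v, v ∈ dualCone (node ts) ∧ Stot (node ts) v = 1 ∧ F = ray v ∧
      ∀ i : Fin ts.length, res i.1 v = 0 ∨
        (Stot (ts.get i) (res i.1 v) = 1
          ∧ IsOneDimFace (dualCone (ts.get i)) (ray (res i.1 v))) := by
  classical
  obtain ⟨v0, hv00, hFv0, hv0C⟩ := face_rep hF
  have hs0 : 0 < Stot (node ts) v0 := Stot_pos hct hv0C hv00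
  have hvC : (Stot (node ts) v0)⁻¹ • v0 ∈ dualCone (node ts) :=
    dualCone_smul (inv_nonneg.2 hs0.le) hv0C
  have hvS : Stot (node ts) ((Stot (node ts) v0)⁻¹ • v0) = 1 := by
    rw [Stot_smul, inv_mul_cancel₀ (ne_of_gt hs0)]
  have hFv : F = ray ((Stot (node ts) v0)⁻¹ • v0) := by
    rw [hFv0, ray_smul_pos (inv_pos.2 hs0) v0]
  have hext : ∀ X ∈ dualCone (node ts), ∀ Z ∈ dualCone (node ts),
      X + Z ∈ ray ((Stot (node ts) v0)⁻¹ • v0)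
      → X ∈ ray ((Stot (node ts) v0)⁻¹ • v0) ∧ Z ∈ ray ((Stot (node ts) v0)⁻¹ • v0) := by
    intro X hX Z hZ hXZ
    rw [← hFv] at hXZ ⊢
    exact hF.2.2 X hX Z hZ hXZ
  refine ⟨(Stot (node ts) v0)⁻¹ • v0, hvC, hvS, hFv, fun i => ?_⟩
  by_cases hi : res i.1 ((Stot (node ts) v0)⁻¹ • v0) = 0
  · exact Or.inl hi
  · exact Or.inr ⟨stepB hct hvC hvS hext i hi,
      stepC hct hvC hvS hext i hi (stepB hct hvC hvS hext i hi)⟩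

end CTree
end AuxDev7
section AuxDev8
namespace CTree
variable {α : Type}

lemma BUILD {ts : List (CTree α)} (hct : IsColoredTree (node ts))
    (y : Fin ts.length → (List ℕ → ℝ))
    (hyC : ∀ i, y i ∈ dualCone (ts.get i))
    (hy1 : ∀ i, y i = 0 ∨ (Stot (ts.get i) (y i) = 1
      ∧ IsOneDimFace (dualCone (ts.get i)) (ray (y i)))) :
    IsOneDimFace (dualCone (node ts))
      (ray (mast ts (1 - ∑ i : Fin ts.length, Stot (ts.get i) (y i)) y))
    ∧ mast ts (1 - ∑ i : Fin ts.length, Stot (ts.get i) (y i)) y ∈ dualCone (node ts)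
    ∧ Stot (node ts)
        (mast ts (1 - ∑ i : Fin ts.length, Stot (ts.get i) (y i)) y) = 1 := by
  classical
  have hσ01 : ∀ i, Stot (ts.get i) (y i) = 0 ∨ Stot (ts.get i) (y i) = 1 := by
    intro i
    rcases hy1 i with h | h
    · left; rw [h, Stot_zero]
    · right; exact h.1
  have hσ0 : ∀ i, 0 ≤ Stot (ts.get i) (y i) := by
    intro i; rcases hσ01 i with h | h <;> rw [h] <;> norm_num
  have hσle : ∀ i, Stot (ts.get i) (y i) ≤ 1 := by
    intro i; rcases hσ01 i with h | h <;> rw [h] <;> norm_num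
  have hvS : Stot (node ts)
      (mast ts (1 - ∑ i : Fin ts.length, Stot (ts.get i) (y i)) y) = 1 := by
    rw [mast_Stot]; ring
  have hvC : mast ts (1 - ∑ i : Fin ts.length, Stot (ts.get i) (y i)) y
      ∈ dualCone (node ts) := by
    refine mast_mem hyC fun j => ?_
    have := hσle j
    linarith
  have hvne : mast ts (1 - ∑ i : Fin ts.length, Stot (ts.get i) (y i)) y ≠ 0 := by
    intro h
    rw [h, Stot_zero] at hvS
    exact one_ne_zero hvS.symm
  refine ⟨⟨ray_subset_dualCone hvC, ⟨_, hvne, rfl⟩, ?_⟩, hvC, hvS⟩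
  intro X hX Z hZ hXZ
  obtain ⟨c, hc0, hcv⟩ := hXZ
  have hXn := (mem_dualCone_node ts X).1 hX
  have hZn := (mem_dualCone_node ts Z).1 hZ
  have haX : 0 ≤ Stot (node ts) X := Stot_nonneg hct hX
  have haZ : 0 ≤ Stot (node ts) Z := Stot_nonneg hct hZ
  have habc : Stot (node ts) X + Stot (node ts) Z = c := by
    have h1 := congrArg (Stot (node ts)) hcv
    rw [Stot_add, Stot_smul, hvS, mul_one] at h1
    exact h1
  -- per-subtree equations
  have hresvy : ∀ i : Fin ts.length,
      res i.1 (mast ts (1 - ∑ i : Fin ts.length, Stot (ts.get i) (y i)) y) = y i :=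
    fun i => mast_res ts _ y i
  have hressum : ∀ i : Fin ts.length, res i.1 X + res i.1 Z = c • y i := by
    intro i
    have h1 := congrArg (res i.1) hcv
    rw [res_add', res_smul', hresvy i] at h1
    exact h1
  have hkey : ∀ i : Fin ts.length,
      res i.1 X = Stot (node ts) X • y i ∧ res i.1 Z = Stot (node ts) Z • y i := by
    intro i
    rcases hy1 i with h0 | ⟨hσ1, hface⟩
    · have hz : res i.1 X + res i.1 Z = 0 := by rw [hressum i, h0, smul_zero]
      obtain ⟨hx0, hz0⟩ := child_pointed hct i (hXn.2.1 i) (hZn.2.1 i) hz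
      rw [hx0, hz0, h0, smul_zero, smul_zero]
      exact ⟨rfl, rfl⟩
    · obtain ⟨hXr, hZr⟩ := hface.2.2 _ (hXn.2.1 i) _ (hZn.2.1 i)
        (by rw [hressum i]; exact ⟨c, hc0, rfl⟩)
      obtain ⟨a1, ha1, hXa⟩ := hXr
      obtain ⟨b1, hb1, hZb⟩ := hZr
      have hSX : Stot (ts.get i) (res i.1 X) = a1 := by
        rw [hXa, Stot_smul, hσ1, mul_one]
      have hSZ : Stot (ts.get i) (res i.1 Z) = b1 := by
        rw [hZb, Stot_smul, hσ1, mul_one]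
      have hc1 : a1 + b1 = c := by
        have h2 := congrArg (Stot (ts.get i)) (hressum i)
        rw [Stot_add, Stot_smul, hσ1, mul_one, hSX, hSZ] at h2
        exact h2
      have hle1 : a1 ≤ Stot (node ts) X := hSX ▸ hXn.2.2 i
      have hle2 : b1 ≤ Stot (node ts) Z := hSZ ▸ hZn.2.2 i
      have ha : a1 = Stot (node ts) X := by linarith
      have hb : b1 = Stot (node ts) Z := by linarith
      rw [hXa, hZb, ha, hb]
      exact ⟨rfl, rfl⟩
  -- root coordinates
  have hroot : ∀ W : List ℕ → ℝ, W ∈ dualCone (node ts) →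
      (∀ i : Fin ts.length, res i.1 W = Stot (node ts) W • y i) →
      W = Stot (node ts) W • mast ts (1 - ∑ i : Fin ts.length, Stot (ts.get i) (y i)) y := by
    intro W hW hWres
    have hWnil : W [] = Stot (node ts) W * (1 - ∑ i : Fin ts.length, Stot (ts.get i) (y i)) := by
      have h1 := Stot_node ts W
      have h2 : ∀ i : Fin ts.length, Stot (ts.get i) (res i.1 W)
          = Stot (node ts) W * Stot (ts.get i) (y i) := by
        intro i; rw [hWres i, Stot_smul]
      rw [Finset.sum_congr rfl fun i _ => h2 i, ← Finset.mul_sum] at h1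
      have h3 := h1
      ring_nf at h3 ⊢
      linarith [h3]
    rw [mast_smul]
    conv_lhs => rw [decomp hW.1]
    refine congrArg₂ (mast ts) hWnil (funext fun i => ?_)
    exact hWres i
  refine ⟨⟨Stot (node ts) X, haX, hroot X hX fun i => (hkey i).1⟩,
    ⟨Stot (node ts) Z, haZ, hroot Z hZ fun i => (hkey i).2⟩⟩

end CTree
end AuxDev8
section AuxDev9
namespace CTree
variable {α : Type}

lemma isEmpty_faces_leaf (a : α) :
    IsEmpty {F : Set (List ℕ → ℝ) // IsOneDimFace (dualCone (leaf a)) F} := by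
  refine ⟨fun F => ?_⟩
  obtain ⟨w, hw0, _, hwC⟩ := face_rep F.2
  exact hw0 (mem_dualCone_leaf.1 hwC)

lemma nat_card_option (X : Type) [Finite X] : Nat.card (Option X) = Nat.card X + 1 := by
  have : Fintype X := Fintype.ofFinite X
  simp [Nat.card_eq_fintype_card]

lemma card_faces_node {ts : List (CTree α)} (hct : IsColoredTree (node ts)) :
    Nat.card {F : Set (List ℕ → ℝ) // IsOneDimFace (dualCone (node ts)) F}
      = ∏ i : Fin ts.length,
        (Nat.card {F : Set (List ℕ → ℝ) // IsOneDimFace (dualCone (ts.get i)) F} + 1) := by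
  classical
  have hrep : ∀ F : {F : Set (List ℕ → ℝ) // IsOneDimFace (dualCone (node ts)) F},
      ∃ v, v ∈ dualCone (node ts) ∧ Stot (node ts) v = 1 ∧ F.1 = ray v ∧
        ∀ i : Fin ts.length, res i.1 v = 0 ∨
          (Stot (ts.get i) (res i.1 v) = 1
            ∧ IsOneDimFace (dualCone (ts.get i)) (ray (res i.1 v))) :=
    fun F => STRUCT hct F.2
  choose v hvC hvS hvF hvi using hrep
  have hbij : Function.Bijective
      (fun F : {F : Set (List ℕ → ℝ) // IsOneDimFace (dualCone (node ts)) F} =>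
        fun i : Fin ts.length => if h : res i.1 (v F) = 0 then none
          else some (⟨ray (res i.1 (v F)), ((hvi F i).resolve_left h).2⟩ :
            {F : Set (List ℕ → ℝ) // IsOneDimFace (dualCone (ts.get i)) F})) := by
    constructor
    · -- injective
      intro F G hFG
      have hres : ∀ i : Fin ts.length, res i.1 (v F) = res i.1 (v G) := by
        intro i
        have h1 := congrFun hFG i
        dsimp only at h1
        by_cases hF0 : res i.1 (v F) = 0 <;> by_cases hG0 : res i.1 (v G) = 0
        · rw [hF0, hG0]
        · rw [dif_pos hF0, dif_neg hG0] at h1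
          exact absurd h1 (by simp)
        · rw [dif_neg hF0, dif_pos hG0] at h1
          exact absurd h1 (by simp)
        · rw [dif_neg hF0, dif_neg hG0] at h1
          have h2 : ray (res i.1 (v F)) = ray (res i.1 (v G)) :=
            congrArg Subtype.val (Option.some_injective _ h1)
          have hsF : Stot (ts.get i) (res i.1 (v F)) = 1 := ((hvi F i).resolve_left hF0).1
          have hsG : Stot (ts.get i) (res i.1 (v G)) = 1 := ((hvi G i).resolve_left hG0).1
          have h3 : res i.1 (v G) ∈ ray (res i.1 (v F)) := h2 ▸ mem_ray_self _
          obtain ⟨cc, hcc0, hcc⟩ := h3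
          have h4 := congrArg (Stot (ts.get i)) hcc
          rw [Stot_smul, hsF, hsG] at h4
          rw [hcc, show cc = 1 by nlinarith [h4], one_smul]
      have hveq : v F = v G := by
        conv_lhs => rw [decomp (hvC F).1]
        conv_rhs => rw [decomp (hvC G).1]
        refine congrArg₂ (mast ts) ?_ (funext fun i => hres i)
        have h1 := Stot_node ts (v F); rw [hvS F] at h1
        have h2 := Stot_node ts (v G); rw [hvS G] at h2
        have h3 : ∑ i : Fin ts.length, Stot (ts.get i) (res i.1 (v F))
            = ∑ i : Fin ts.length, Stot (ts.get i) (res i.1 (v G)) :=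
          Finset.sum_congr rfl fun i _ => by rw [hres i]
        linarith
      exact Subtype.ext (by rw [hvF F, hvF G, hveq])
    · -- surjective
      intro g
      have hy : ∀ i : Fin ts.length, ∃ yi, yi ∈ dualCone (ts.get i) ∧
          ((g i = none ∧ yi = 0) ∨
           (∃ Fi : {F : Set (List ℕ → ℝ) // IsOneDimFace (dualCone (ts.get i)) F},
              g i = some Fi ∧ Stot (ts.get i) yi = 1 ∧ ray yi = Fi.1
              ∧ IsOneDimFace (dualCone (ts.get i)) (ray yi))) := by
        intro i
        cases hgi : g i with
        | none => exact ⟨0, dualCone_zero _, Or.inl ⟨rfl, rfl⟩⟩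
        | some Fi =>
          obtain ⟨w, hw0, hFr, hwC⟩ := face_rep Fi.2
          have hpos : 0 < Stot (ts.get i) w := child_pos hct i hwC hw0
          refine ⟨(Stot (ts.get i) w)⁻¹ • w,
            dualCone_smul (inv_nonneg.2 hpos.le) hwC, Or.inr ⟨Fi, rfl, ?_, ?_, ?_⟩⟩
          · rw [Stot_smul, inv_mul_cancel₀ (ne_of_gt hpos)]
          · rw [ray_smul_pos (inv_pos.2 hpos) w, ← hFr]
          · rw [ray_smul_pos (inv_pos.2 hpos) w]
            exact hFr ▸ Fi.2
      choose yv hyC hyP using hy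
      have hy1 : ∀ i, yv i = 0 ∨ (Stot (ts.get i) (yv i) = 1
          ∧ IsOneDimFace (dualCone (ts.get i)) (ray (yv i))) := by
        intro i
        rcases hyP i with ⟨-, h0⟩ | ⟨Fi, -, h1, -, h3⟩
        · exact Or.inl h0
        · exact Or.inr ⟨h1, h3⟩
      obtain ⟨hface, hMC, hMS⟩ := BUILD hct yv hyC hy1
      refine ⟨⟨ray (mast ts (1 - ∑ i : Fin ts.length, Stot (ts.get i) (yv i)) yv), hface⟩, ?_⟩
      have hrayeq : ray (mast ts (1 - ∑ i : Fin ts.length, Stot (ts.get i) (yv i)) yv)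
          = ray (v ⟨ray (mast ts (1 - ∑ i : Fin ts.length, Stot (ts.get i) (yv i)) yv), hface⟩) :=
        hvF ⟨ray (mast ts (1 - ∑ i : Fin ts.length, Stot (ts.get i) (yv i)) yv), hface⟩
      have hveq : v ⟨ray (mast ts (1 - ∑ i : Fin ts.length, Stot (ts.get i) (yv i)) yv), hface⟩
          = mast ts (1 - ∑ i : Fin ts.length, Stot (ts.get i) (yv i)) yv := by
        have h3 : v ⟨ray (mast ts (1 - ∑ i : Fin ts.length, Stot (ts.get i) (yv i)) yv), hface⟩
            ∈ ray (mast ts (1 - ∑ i : Fin ts.length, Stot (ts.get i) (yv i)) yv) := by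
          have h3' := mem_ray_self
            (v ⟨ray (mast ts (1 - ∑ i : Fin ts.length, Stot (ts.get i) (yv i)) yv), hface⟩)
          rw [← hrayeq] at h3'
          exact h3'
        obtain ⟨cc, hcc0, hcc⟩ := h3
        have h4 := congrArg (Stot (node ts)) hcc
        rw [Stot_smul, hMS,
          hvS ⟨ray (mast ts (1 - ∑ i : Fin ts.length, Stot (ts.get i) (yv i)) yv), hface⟩] at h4
        rw [hcc, show cc = 1 by nlinarith [h4], one_smul]
      funext i
      dsimp only
      rcases hyP i with ⟨hgnone, h0⟩ | ⟨Fi, hgsome, h1, h2, -⟩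
      · rw [hgnone, dif_pos (by rw [hveq, mast_res]; exact h0)]
      · have hresM : res i.1 (v ⟨ray (mast ts
            (1 - ∑ i : Fin ts.length, Stot (ts.get i) (yv i)) yv), hface⟩) = yv i := by
          rw [hveq]; exact mast_res ts _ yv i
        have hne : res i.1 (v ⟨ray (mast ts
            (1 - ∑ i : Fin ts.length, Stot (ts.get i) (yv i)) yv), hface⟩) ≠ 0 := by
          rw [hresM]
          intro hc
          rw [hc, Stot_zero] at h1
          exact one_ne_zero h1.symm
        rw [hgsome, dif_neg hne]
        refine congrArg some (Subtype.ext ?_)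
        show ray (res i.1 (v ⟨ray (mast ts
          (1 - ∑ i : Fin ts.length, Stot (ts.get i) (yv i)) yv), hface⟩)) = Fi.1
        rw [hresM, h2]
  rw [Nat.card_eq_of_bijective _ hbij, Nat.card_pi]
  refine Finset.prod_congr rfl fun i _ => ?_
  haveI := finite_faces (ts.get i)
  exact nat_card_option _

lemma per_child (c : CTree α) :
    (match c with
      | CTree.leaf _ => 0
      | CTree.node cs =>
          Set.ncard {F | CTree.IsOneDimFace (CTree.dualCone (CTree.node cs)) F}) + 1
    = Nat.card {F : Set (List ℕ → ℝ) // IsOneDimFace (dualCone c) F} + 1 := by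
  cases c with
  | leaf a =>
    haveI := isEmpty_faces_leaf a
    rw [Nat.card_of_isEmpty]
  | node cs => rfl

end CTree
end AuxDev9
/-- If `Γ` has principal subtrees `Γ₁, …, Γ_m` and `r_i` denotes the
number of one-dimensional faces of `C(Γ_i)` (with `r_i = 0` when `Γ_i` is trivial),
then the number of one-dimensional faces of `C(Γ)` is `(r₁ + 1) ⋯ (r_m + 1)`. -/
theorem ncard_oneDimFaces_eq_prod {α : Type} (ts : List (CTree α))
    (h : (CTree.node ts).IsColoredTree) :
    Set.ncard {F | CTree.IsOneDimFace (CTree.dualCone (CTree.node ts)) F} =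
      (ts.map (fun c =>
        (match c with
          | CTree.leaf _ => 0
          | CTree.node cs =>
              Set.ncard {F | CTree.IsOneDimFace (CTree.dualCone (CTree.node cs)) F})
        + 1)).prod := by
  classical
  have hmain := CTree.card_faces_node h
  have hL : Set.ncard {F | CTree.IsOneDimFace (CTree.dualCone (CTree.node ts)) F}
      = Nat.card {F : Set (List ℕ → ℝ) //
          CTree.IsOneDimFace (CTree.dualCone (CTree.node ts)) F} := rfl
  rw [hL, hmain]
  have hR : (ts.map (fun c => (match c with
        | CTree.leaf _ => 0
        | CTree.node cs =>
            Set.ncard {F | CTree.IsOneDimFace (CTree.dualCone (CTree.node cs)) F}) + 1))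
      = List.ofFn (fun i : Fin ts.length => (match ts.get i with
        | CTree.leaf _ => 0
        | CTree.node cs =>
            Set.ncard {F | CTree.IsOneDimFace (CTree.dualCone (CTree.node cs)) F}) + 1) := by
    conv_lhs => rw [← List.ofFn_get ts, List.map_ofFn]
    rfl
  rw [hR, List.prod_ofFn]
  exact Finset.prod_congr rfl fun i _ => (CTree.per_child (ts.get i)).symm
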